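/- Let Y and η be real random variables with positive variances, finite second moments, and E[η] = 0. Then E[F_η^{-1}(U) F_Y^{-1}(U)] > 0 where U ~ Uniform[0,1]; that is, the maximal covariance of two non-degenerate distributions, one of which is centered, is strictly positive. -/

import Mathlib

open MeasureTheory Set Filter

/-- Generalized inverse (quantile function) of the cdf of a measure `μ` on `ℝ`. -/
noncomputable def qf (μ : Measure ℝ) (t : ℝ) : ℝ :=
  sInf {x | t ≤ (μ (Set.Iic x)).toReal}

section Aux

open ProbabilityTheory

variable {ν : Measure ℝ} [IsProbabilityMeasure ν]

lemma qf_le_iff {t : ℝ} (ht0 : 0 < t) (ht1 : t < 1) (x : ℝ) :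
    qf ν t ≤ x ↔ t ≤ cdf ν x := by
  have hSeq : {y : ℝ | t ≤ (ν (Set.Iic y)).toReal} = {y : ℝ | t ≤ cdf ν y} := by
    simp [cdf_eq_real, Measure.real]
  have hq : qf ν t = sInf {y : ℝ | t ≤ cdf ν y} := by rw [qf, hSeq]
  set S := {y : ℝ | t ≤ cdf ν y} with hS
  have hne : S.Nonempty := by
    obtain ⟨y, hy⟩ := (Filter.Tendsto.eventually_const_lt ht1 (tendsto_cdf_atTop ν)).exists
    exact ⟨y, hy.le⟩
  obtain ⟨y₀, hy₀⟩ := (Filter.Tendsto.eventually_lt_const ht0 (tendsto_cdf_atBot ν)).exists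
  have hbdd : BddBelow S := by
    refine ⟨y₀, fun y hy => ?_⟩
    by_contra h
    exact absurd (le_trans hy ((cdf ν).mono (le_of_not_ge h))) (not_le.2 hy₀)
  constructor
  · intro h
    have htd : Filter.Tendsto (cdf ν) (nhdsWithin x (Set.Ioi x)) (nhds (cdf ν x)) :=
      ((cdf ν).right_continuous x).mono_left (nhdsWithin_mono x Set.Ioi_subset_Ici_self)
    refine ge_of_tendsto htd ?_
    filter_upwards [self_mem_nhdsWithin] with y hy
    have : sInf S < y := lt_of_le_of_lt (hq ▸ h) hy
    obtain ⟨z, hz, hzy⟩ := (csInf_lt_iff hbdd hne).1 this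
    exact le_trans hz ((cdf ν).mono hzy.le)
  · intro h
    rw [hq]
    exact csInf_le hbdd h

lemma monotoneOn_qf : MonotoneOn (qf ν) (Set.Ioo 0 1) := by
  intro a ha b hb hab
  rw [qf_le_iff ha.1 ha.2]
  exact hab.trans ((qf_le_iff hb.1 hb.2 _).1 le_rfl)

lemma aemeasurable_qf : AEMeasurable (qf ν) (volume.restrict (Set.Ioo (0:ℝ) 1)) :=
  aemeasurable_restrict_of_monotoneOn measurableSet_Ioo monotoneOn_qf

lemma map_qf : (volume.restrict (Set.Ioo (0:ℝ) 1)).map (qf ν) = ν := by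
  have hm : AEMeasurable (qf ν) (volume.restrict (Set.Ioo (0:ℝ) 1)) := aemeasurable_qf
  have hP : IsProbabilityMeasure (volume.restrict (Set.Ioo (0:ℝ) 1)) := by
    constructor
    simp [Real.volume_Ioo]
  have : IsProbabilityMeasure ((volume.restrict (Set.Ioo (0:ℝ) 1)).map (qf ν)) :=
    Measure.isProbabilityMeasure_map hm
  refine Measure.ext_of_Iic _ _ fun x => ?_
  rw [Measure.map_apply_of_aemeasurable hm measurableSet_Iic,
      Measure.restrict_apply' measurableSet_Ioo]
  have hset : qf ν ⁻¹' Set.Iic x ∩ Set.Ioo 0 1 = Set.Iic (cdf ν x) ∩ Set.Ioo 0 1 := by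
    ext t
    simp only [Set.mem_inter_iff, Set.mem_preimage, Set.mem_Iic, Set.mem_Ioo, and_congr_left_iff]
    intro ht
    rw [qf_le_iff ht.1 ht.2]
  rw [hset, ← ProbabilityTheory.ofReal_cdf]
  have h0 : 0 ≤ cdf ν x := cdf_nonneg ν x
  rcases lt_or_ge (cdf ν x) 1 with h1 | h1
  · have : Set.Iic (cdf ν x) ∩ Set.Ioo 0 1 = Set.Ioc 0 (cdf ν x) := by
      ext t
      simp only [Set.mem_inter_iff, Set.mem_Iic, Set.mem_Ioo, Set.mem_Ioc]
      constructor
      · rintro ⟨h, h2, h3⟩; exact ⟨h2, h⟩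
      · rintro ⟨h2, h⟩; exact ⟨h, h2, lt_of_le_of_lt h h1⟩
    rw [this, Real.volume_Ioc, sub_zero]
  · have h1' : cdf ν x = 1 := le_antisymm (cdf_le_one ν x) h1
    have : Set.Iic (cdf ν x) ∩ Set.Ioo 0 1 = Set.Ioo 0 1 := by
      rw [Set.inter_eq_right]
      intro t ht
      exact le_trans ht.2.le h1'.ge
    rw [this, Real.volume_Ioo, h1']
    norm_num

end Aux

section Key

open ProbabilityTheory

local notation "P" => volume.restrict (Set.Ioo (0:ℝ) 1)

lemma isProbP : IsProbabilityMeasure (volume.restrict (Set.Ioo (0:ℝ) 1)) := by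
  constructor
  simp [Real.volume_Ioo]

/-- an a.e.-constant variable has zero variance -/
lemma var_zero_of_ae_const {α : Type*} [MeasurableSpace α] {μ : Measure α} {X : α → ℝ}
    (hX : AEMeasurable X μ) (h : X =ᵐ[μ] fun _ => ∫ x, X x ∂μ) : variance X μ = 0 := by
  rw [variance, (evariance_eq_zero_iff hX).2 h]
  simp

lemma not_ae_nonneg {q : ℝ → ℝ} (hqm : AEMeasurable q P)
    (hqi : Integrable q P) (hqmean : ∫ t, q t ∂P = 0)
    (hqvar : 0 < variance q P) (h : 0 ≤ᵐ[P] q) : False := by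
  have h0 : q =ᵐ[P] 0 := (integral_eq_zero_iff_of_nonneg_ae h hqi).1 hqmean
  have : q =ᵐ[P] fun _ => ∫ t, q t ∂P := by
    rw [hqmean]; exact h0
  exact absurd (var_zero_of_ae_const hqm this) (ne_of_gt hqvar)

lemma exists_pts {q : ℝ → ℝ} (hqm : MonotoneOn q (Set.Ioo 0 1))
    (hqvar : 0 < variance q P) :
    ∃ a ∈ Set.Ioo (0:ℝ) 1, ∃ b ∈ Set.Ioo (0:ℝ) 1, a < b ∧ q a < q b := by
  have := isProbP
  by_contra hcon
  push_neg at hcon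
  have hconst : ∀ t ∈ Set.Ioo (0:ℝ) 1, q t = q (1/2) := by
    have h2 : (1/2 : ℝ) ∈ Set.Ioo (0:ℝ) 1 := by norm_num
    intro t ht
    rcases lt_trichotomy t (1/2) with h | h | h
    · exact le_antisymm (hqm ht h2 h.le) (le_of_not_gt fun hlt => by
        exact absurd hlt (not_lt.2 (hcon t ht (1/2) h2 h)))
    · rw [h]
    · exact le_antisymm (le_of_not_gt fun hlt => by
        exact absurd hlt (not_lt.2 (hcon (1/2) h2 t ht h))) (hqm h2 ht h.le)
  have hae : q =ᵐ[P] fun _ => q (1/2) :=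
    (ae_restrict_iff' measurableSet_Ioo).2 (Filter.Eventually.of_forall hconst)
  have hmean : ∫ t, q t ∂P = q (1/2) := by
    rw [integral_congr_ae hae]
    simp
  have : q =ᵐ[P] fun _ => ∫ t, q t ∂P := by rw [hmean]; exact hae
  have hmeas : AEMeasurable q P := aemeasurable_restrict_of_monotoneOn measurableSet_Ioo hqm
  exact absurd (var_zero_of_ae_const hmeas this) (ne_of_gt hqvar)

lemma key_pos {q p : ℝ → ℝ} (hqm : MonotoneOn q (Set.Ioo 0 1)) (hpm : MonotoneOn p (Set.Ioo 0 1))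
    (hq2 : MemLp q 2 P) (hp2 : MemLp p 2 P) (hqmean : ∫ t, q t ∂P = 0)
    (hqvar : 0 < variance q P) (hpvar : 0 < variance p P) :
    0 < ∫ t, q t * p t ∂P := by
  have := isProbP
  have hqmeas : AEMeasurable q P := aemeasurable_restrict_of_monotoneOn measurableSet_Ioo hqm
  have hpmeas : AEMeasurable p P := aemeasurable_restrict_of_monotoneOn measurableSet_Ioo hpm
  have hqi : Integrable q P := hq2.integrable one_le_two
  have hpi : Integrable p P := hp2.integrable one_le_two
  have hqpi : Integrable (fun t => q t * p t) P := by
    refine Integrable.mono' ((hq2.integrable_sq.add hp2.integrable_sq).div_const 2)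
      (hq2.aestronglyMeasurable.mul hp2.aestronglyMeasurable)
      (Filter.Eventually.of_forall fun t => ?_)
    simp only [Pi.add_apply, Real.norm_eq_abs, abs_mul]
    nlinarith [sq_nonneg (|q t| - |p t|), sq_abs (q t), sq_abs (p t), abs_nonneg (q t),
      abs_nonneg (p t)]
  -- the set where q is negative
  set N := {t | t ∈ Set.Ioo (0:ℝ) 1 ∧ q t < 0} with hN
  have hNne : N.Nonempty := by
    by_contra hcon
    rw [Set.not_nonempty_iff_eq_empty] at hcon
    refine not_ae_nonneg hqmeas hqi hqmean hqvar ?_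
    refine (ae_restrict_iff' measurableSet_Ioo).2 (Filter.Eventually.of_forall fun t ht => ?_)
    by_contra hneg
    exact absurd (Set.mem_setOf.2 ⟨ht, lt_of_not_ge hneg⟩) (hcon ▸ Set.notMem_empty t)
  have hNbdd : BddAbove N := ⟨1, fun t ht => ht.1.2.le⟩
  set c := sSup N with hc
  have hNne' := hNne
  obtain ⟨t₀, ht₀⟩ := hNne'
  have hc0 : 0 < c := lt_of_lt_of_le ht₀.1.1 (le_csSup hNbdd ht₀)
  have hc1 : c ≤ 1 := csSup_le hNne fun t ht => ht.1.2.le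
  have hneg : ∀ t ∈ Set.Ioo (0:ℝ) 1, t < c → q t < 0 := by
    intro t ht htc
    obtain ⟨t', ht', htt'⟩ := exists_lt_of_lt_csSup hNne htc
    exact lt_of_le_of_lt (hqm ht ht'.1 htt'.le) ht'.2
  have hpos : ∀ t ∈ Set.Ioo (0:ℝ) 1, c < t → 0 ≤ q t := by
    intro t ht hct
    by_contra h
    exact absurd (le_csSup hNbdd (Set.mem_setOf.2 ⟨ht, lt_of_not_ge h⟩)) (not_le.2 hct)
  have hclt1 : c < 1 := by
    rcases lt_or_ge c 1 with h | h
    · exact h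
    exfalso
    have hle : ∀ t ∈ Set.Ioo (0:ℝ) 1, q t < 0 := fun t ht =>
      hneg t ht (lt_of_lt_of_le ht.2 h)
    refine not_ae_nonneg (q := fun t => -q t) hqmeas.neg hqi.neg (by rw [integral_neg, hqmean, neg_zero])
      ?_ ?_
    · have : variance (fun t => -q t) P = variance (fun t => (-1 : ℝ) * q t) P := by
        congr 1; ext t; ring
      rw [this, variance_const_mul]
      simpa using hqvar
    · refine (ae_restrict_iff' measurableSet_Ioo).2 (Filter.Eventually.of_forall fun t ht => ?_)
      simp only [Pi.zero_apply]
      linarith [hle t ht]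
  have hcIoo : c ∈ Set.Ioo (0:ℝ) 1 := ⟨hc0, hclt1⟩
  set k := p c with hk
  set g := fun t => q t * (p t - k) with hg
  have hgnn : ∀ t ∈ Set.Ioo (0:ℝ) 1, 0 ≤ g t := by
    intro t ht
    rcases lt_trichotomy t c with h | h | h
    · have h1 := hneg t ht h
      have h2 := sub_nonpos.2 (hpm ht hcIoo h.le)
      show 0 ≤ q t * (p t - k)
      nlinarith [mul_nonneg (neg_nonneg.2 h1.le) (neg_nonneg.2 h2)]
    · simp [hg, h, hk]
    · exact mul_nonneg (hpos t ht h) (sub_nonneg.2 (hpm hcIoo ht h.le))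
  have hgi : Integrable g P := by
    have : g = fun t => q t * p t - q t * k := by ext t; simp [hg]; ring
    rw [this]
    exact hqpi.sub (hqi.mul_const k)
  have hgint : ∫ t, g t ∂P = ∫ t, q t * p t ∂P := by
    have : g = fun t => q t * p t - q t * k := by ext t; simp [hg]; ring
    rw [this, integral_sub hqpi (hqi.mul_const k), integral_mul_const, hqmean]
    ring
  rw [← hgint]
  have hgae : 0 ≤ᵐ[P] g :=
    (ae_restrict_iff' measurableSet_Ioo).2 (Filter.Eventually.of_forall hgnn)
  rw [integral_pos_iff_support_of_nonneg_ae hgae hgi]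
  -- find a positive-measure set inside the support
  -- q is strictly positive somewhere
  have hd : ∃ d ∈ Set.Ioo (0:ℝ) 1, 0 < q d := by
    by_contra hcon
    push_neg at hcon
    refine not_ae_nonneg (q := fun t => -q t) hqmeas.neg hqi.neg (by rw [integral_neg, hqmean, neg_zero]) ?_ ?_
    · have : variance (fun t => -q t) P = variance (fun t => (-1 : ℝ) * q t) P := by
        congr 1; ext t; ring
      rw [this, variance_const_mul]
      simpa using hqvar
    · refine (ae_restrict_iff' measurableSet_Ioo).2 (Filter.Eventually.of_forall fun t ht => ?_)
      simp only [Pi.zero_apply]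
      linarith [hcon t ht]
  obtain ⟨d, hd, hdq⟩ := hd
  obtain ⟨a, ha, b, hb, hab, hpab⟩ := exists_pts hpm hpvar
  have hsub : ∀ s : Set ℝ, s ⊆ Set.Ioo 0 1 → (∀ t ∈ s, g t ≠ 0) →
      volume s ≠ 0 → 0 < (P) (Function.support g) := by
    intro s hs hgne hvol
    have h1 : s ⊆ Function.support g := fun t ht => hgne t ht
    calc (0:ENNReal) < (P) s := by
          rw [Measure.restrict_apply' measurableSet_Ioo, Set.inter_eq_left.2 hs]
          exact pos_iff_ne_zero.2 hvol
      _ ≤ (P) (Function.support g) := measure_mono h1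
  rcases lt_or_ge k (p b) with hkb | hkb
  · -- use interval (max b d, 1)
    set m := max b d with hm
    have hm1 : m < 1 := max_lt hb.2 hd.2
    refine hsub (Set.Ioo m 1) (fun t ht => ⟨lt_trans (lt_of_lt_of_le hb.1 (le_max_left _ _)) ht.1, ht.2⟩) ?_ ?_
    · intro t ht
      have htI : t ∈ Set.Ioo (0:ℝ) 1 :=
        ⟨lt_trans (lt_of_lt_of_le hb.1 (le_max_left _ _)) ht.1, ht.2⟩
      have h1 : 0 < q t := lt_of_lt_of_le hdq (hqm hd htI (le_trans (le_max_right _ _) ht.1.le))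
      have h2 : k < p t := lt_of_lt_of_le hkb (hpm hb htI (le_trans (le_max_left _ _) ht.1.le))
      exact ne_of_gt (mul_pos h1 (sub_pos.2 h2))
    · rw [Real.volume_Ioo]
      simp only [ne_eq, ENNReal.ofReal_eq_zero, not_le]
      linarith
  · -- then p a < k; use interval (0, min a c)
    have hak : p a < k := lt_of_lt_of_le hpab hkb
    set m := min a c with hm
    have hm0 : 0 < m := lt_min ha.1 hc0
    refine hsub (Set.Ioo 0 m) (fun t ht => ⟨ht.1, lt_of_lt_of_le ht.2 (le_trans (min_le_left _ _) ha.2.le)⟩) ?_ ?_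
    · intro t ht
      have htI : t ∈ Set.Ioo (0:ℝ) 1 :=
        ⟨ht.1, lt_of_lt_of_le ht.2 (le_trans (min_le_left _ _) ha.2.le)⟩
      have h1 : q t < 0 := hneg t htI (lt_of_lt_of_le ht.2 (min_le_right _ _))
      have h2 : p t < k := lt_of_le_of_lt (hpm htI ha (le_trans ht.2.le (min_le_left _ _))) hak
      exact ne_of_gt (mul_pos_of_neg_of_neg h1 (sub_neg.2 h2))
    · rw [Real.volume_Ioo]
      simp only [ne_eq, ENNReal.ofReal_eq_zero, not_le]
      linarith

end Key

/-- If `Y` and `η` have positive variances, finite second moments and `E[η] = 0`,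
then the maximal covariance `E[F_η⁻¹(U) F_Y⁻¹(U)]` is strictly positive. -/
theorem stmt_4 {Ω : Type*} [MeasurableSpace Ω] (ℙ : Measure Ω) [IsProbabilityMeasure ℙ]
    (Y η : Ω → ℝ) (hY : Measurable Y) (hη : Measurable η)
    (hY2 : MemLp Y 2 ℙ) (hη2 : MemLp η 2 ℙ)
    (hVarY : 0 < ProbabilityTheory.variance Y ℙ)
    (hVarη : 0 < ProbabilityTheory.variance η ℙ)
    (hmean : ∫ ω, η ω ∂ℙ = 0) :
    0 < ∫ t in Set.Ioc (0:ℝ) 1, qf (Measure.map η ℙ) t * qf (Measure.map Y ℙ) t := by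
  have := isProbP
  have hν : IsProbabilityMeasure (Measure.map η ℙ) := Measure.isProbabilityMeasure_map hη.aemeasurable
  have hμ : IsProbabilityMeasure (Measure.map Y ℙ) := Measure.isProbabilityMeasure_map hY.aemeasurable
  set q := qf (Measure.map η ℙ) with hq
  set p := qf (Measure.map Y ℙ) with hp
  have hIoc : ∫ t in Set.Ioc (0:ℝ) 1, q t * p t = ∫ t in Set.Ioo (0:ℝ) 1, q t * p t := by
    refine setIntegral_congr_set ?_
    exact Ioo_ae_eq_Ioc.symm
  rw [hIoc]
  -- identically distributed transfers
  have hidq : ProbabilityTheory.IdentDistrib q η (volume.restrict (Set.Ioo (0:ℝ) 1)) ℙ :=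
    ⟨aemeasurable_qf, hη.aemeasurable, by rw [map_qf]⟩
  have hidp : ProbabilityTheory.IdentDistrib p Y (volume.restrict (Set.Ioo (0:ℝ) 1)) ℙ :=
    ⟨aemeasurable_qf, hY.aemeasurable, by rw [map_qf]⟩
  exact key_pos monotoneOn_qf monotoneOn_qf
    (hidq.symm.memLp_snd hη2) (hidp.symm.memLp_snd hY2)
    (by rw [hidq.integral_eq]; exact hmean)
    (by rw [hidq.variance_eq]; exact hVarη)
    (by rw [hidp.variance_eq]; exact hVarY)
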